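/- In the integer program (eq. 14) for PDAG-Minimum-Paths: if x is a feasible 0–1 assignment, then the set of selected original edges (variables equal to 1, excluding edges from the auxiliary vertices V̂) decomposes into at most n_d vertex-disjoint directed paths in G, each starting at an out-neighbor of a distinct auxiliary vertex, and together these paths contain exactly one vertex of each color. -/

import Mathlib

namespace ILPPaths

variable {V : Type*}

/-- Follow a partial successor function `f` from a start vertex, collecting the orbit. -/
noncomputable def followList (f : V → Option V)
    (wf : WellFounded (fun a b => f b = some a)) : V → List V :=
  wf.fix fun v ih =>
    match h : f v with
    | none => [v]
    | some w => v :: ih w h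

variable {f : V → Option V} {wf : WellFounded (fun a b => f b = some a)}

theorem followList_none {v : V} (h : f v = none) : followList f wf v = [v] := by
  unfold followList
  rw [WellFounded.fix_eq]
  split <;> simp_all

theorem followList_some {v w : V} (h : f v = some w) :
    followList f wf v = v :: followList f wf w := by
  conv_lhs => unfold followList
  rw [WellFounded.fix_eq]
  split
  · simp_all
  · rename_i w' heq
    rw [h] at heq
    cases heq
    rfl

theorem followList_cons (v : V) : ∃ t, followList f wf v = v :: t := by
  cases h : f v with
  | none => exact ⟨[], followList_none h⟩
  | some w => exact ⟨_, followList_some h⟩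

theorem mem_followList_self (v : V) : v ∈ followList f wf v := by
  obtain ⟨t, ht⟩ := followList_cons (wf := wf) v
  rw [ht]; exact List.mem_cons_self

theorem followList_chain' (v : V) :
    List.Chain' (fun a b => f a = some b) (followList f wf v) := by
  apply wf.induction v
  intro x ih
  cases h : f x with
  | none => rw [followList_none h]; exact List.isChain_singleton _
  | some w =>
    rw [followList_some h]
    obtain ⟨t, ht⟩ := followList_cons (wf := wf) w
    rw [ht]; refine List.isChain_cons_cons.mpr ?_
    exact ⟨h, ht ▸ ih w h⟩

theorem mem_followList_iff {v w : V} :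
    w ∈ followList f wf v ↔ Relation.ReflTransGen (fun a b => f a = some b) v w := by
  constructor
  · intro hw
    revert hw
    apply wf.induction v
    intro x ih hw
    cases h : f x with
    | none =>
      rw [followList_none h] at hw
      simp at hw
      exact hw ▸ Relation.ReflTransGen.refl
    | some u =>
      rw [followList_some h] at hw
      rcases List.mem_cons.mp hw with rfl | hw
      · exact Relation.ReflTransGen.refl
      · exact Relation.ReflTransGen.head h (ih u h hw)
  · intro hr
    induction hr using Relation.ReflTransGen.head_induction_on with
    | refl => exact mem_followList_self w
    | head h _ ih =>
      rw [followList_some h]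
      exact List.mem_cons_of_mem _ ih

theorem followList_nodup
    (hirr : ∀ v, ¬ Relation.TransGen (fun a b => f a = some b) v v) (v : V) :
    (followList f wf v).Nodup := by
  apply wf.induction v
  intro x ih
  cases h : f x with
  | none => rw [followList_none h]; simp
  | some w =>
    rw [followList_some h]
    refine List.nodup_cons.mpr ⟨fun hx => ?_, ih w h⟩
    have := mem_followList_iff.mp hx
    exact hirr x (Relation.TransGen.head' h this)

theorem zip_tail_subset_cons (v : V) (l : List V) :
    ∀ e ∈ l.zip l.tail, e ∈ (v :: l).zip l := by
  intro e he
  cases l with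
  | nil => simp at he
  | cons h t => exact List.mem_cons_of_mem _ he

theorem mem_zip_followList {v a b : V} (ha : a ∈ followList f wf v) (hb : f a = some b) :
    (a, b) ∈ (followList f wf v).zip (followList f wf v).tail := by
  revert ha
  apply wf.induction v
  intro x ih ha
  cases h : f x with
  | none =>
    rw [followList_none h] at ha ⊢
    simp at ha
    subst ha; simp_all
  | some w =>
    rw [followList_some h] at ha ⊢
    rcases List.mem_cons.mp ha with rfl | ha
    · have hbw : b = w := by
        rw [h] at hb; exact (Option.some.inj hb).symm
      subst hbw
      obtain ⟨t, ht⟩ := followList_cons (wf := wf) b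
      rw [ht]
      simp
    · have := ih w h ha
      simpa using zip_tail_subset_cons x _ _ this

theorem rel_of_mem_zip {r : V → V → Prop} :
    ∀ {l : List V}, List.Chain' r l → ∀ {a b : V}, (a, b) ∈ l.zip l.tail → r a b := by
  intro l
  induction l with
  | nil => intro _ a b h; simp at h
  | cons x t ih =>
    intro hc a b hab
    cases t with
    | nil => simp at hab
    | cons y s =>
      simp only [List.zip_cons_cons, List.tail_cons, List.mem_cons] at hab
      rcases hab with h | h
      · simp only [Prod.mk.injEq] at h
        obtain ⟨rfl, rfl⟩ := h
        exact (List.isChain_cons_cons.mp hc).1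
      · exact ih (List.isChain_cons_cons.mp hc).2 h

/-- Length of the filtered list when all elements satisfying `p` are equal to `a`. -/
theorem length_filter_eq [DecidableEq V] {p : V → Bool} {a : V} :
    ∀ {l : List V}, l.Nodup → (∀ x ∈ l, p x = true → x = a) →
      (l.filter p).length = if a ∈ l ∧ p a = true then 1 else 0 := by
  intro l
  induction l with
  | nil => simp
  | cons x t ih =>
    intro hnd hall
    have hndt := (List.nodup_cons.mp hnd).2
    have hxt := (List.nodup_cons.mp hnd).1
    have iht := ih hndt (fun y hy hpy => hall y (List.mem_cons_of_mem _ hy) hpy)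
    by_cases hpx : p x = true
    · have hxa : x = a := hall x List.mem_cons_self hpx
      subst hxa
      rw [List.filter_cons_of_pos hpx, List.length_cons, iht]
      simp [hxt, hpx]
    · rw [List.filter_cons_of_neg hpx, iht]
      have hcond : (a ∈ x :: t ∧ p a = true) ↔ (a ∈ t ∧ p a = true) := by
        constructor
        · rintro ⟨hm, hp⟩
          rcases List.mem_cons.mp hm with rfl | hm
          · exact absurd hp hpx
          · exact ⟨hm, hp⟩
        · rintro ⟨hm, hp⟩
          exact ⟨List.mem_cons_of_mem _ hm, hp⟩
      rw [if_congr hcond rfl rfl]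

end ILPPaths


open ILPPaths

/-- If `x` is a feasible 0–1 assignment of the ILP (14) for
PDAG-Minimum-Paths — selected original edges `Xorig` and selected auxiliary edges
`Xaux` satisfying (i) each color has exactly one selected incoming edge, (ii) at each
vertex the selected out-degree is at most the selected in-degree, and (iii) each
auxiliary vertex has at most one selected outgoing edge — then the selected original
edges decompose into at most `n_d` vertex-disjoint directed paths in `G`, each starting
at an out-neighbor of a distinct auxiliary vertex, together containing exactly one
vertex of each color. -/
theorem ilp_solution_decomposes_into_paths
    {V : Type*} [Fintype V] [DecidableEq V] {k nd : ℕ}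
    (E : Finset (V × V))
    (hdag : ∀ v, ¬ Relation.TransGen (fun a b => (a, b) ∈ E) v v)
    (col : V → Fin k)
    (Xorig : Finset (V × V)) (hXE : Xorig ⊆ E)
    (Xaux : Finset (Fin nd × V))
    (hcolor : ∀ c : Fin k,
      (Xorig.filter (fun e => col e.2 = c)).card +
      (Xaux.filter (fun e => col e.2 = c)).card = 1)
    (hflow : ∀ v : V,
      (Xorig.filter (fun e => e.1 = v)).card ≤
      (Xorig.filter (fun e => e.2 = v)).card + (Xaux.filter (fun e => e.2 = v)).card)
    (haux : ∀ i : Fin nd, (Xaux.filter (fun e => e.1 = i)).card ≤ 1) :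
    ∃ P : Fin nd → List V,
      (∀ i, (P i).Nodup) ∧
      (∀ i j, i ≠ j → ∀ v, v ∈ P i → v ∉ P j) ∧
      (∀ i, (P i).Chain' (fun a b => (a, b) ∈ Xorig)) ∧
      (∀ i, ∀ h : P i ≠ [], (i, (P i).head h) ∈ Xaux) ∧
      (∀ e : V × V, e ∈ Xorig ↔ ∃ i, e ∈ (P i).zip (P i).tail) ∧
      (∀ c : Fin k,
        (Finset.univ.sum fun i => ((P i).filter (fun v => col v = c)).length) = 1) := by
  classical
  -- in-degree bound
  have h_in : ∀ v : V,
      (Xorig.filter (fun e => e.2 = v)).card + (Xaux.filter (fun e => e.2 = v)).card ≤ 1 := by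
    intro v
    have h1 : (Xorig.filter (fun e => e.2 = v)).card ≤
        (Xorig.filter (fun e => col e.2 = col v)).card := by
      apply Finset.card_le_card
      intro e he
      simp only [Finset.mem_filter] at he ⊢
      exact ⟨he.1, by rw [he.2]⟩
    have h2 : (Xaux.filter (fun e => e.2 = v)).card ≤
        (Xaux.filter (fun e => col e.2 = col v)).card := by
      apply Finset.card_le_card
      intro e he
      simp only [Finset.mem_filter] at he ⊢
      exact ⟨he.1, by rw [he.2]⟩
    have h3 := hcolor (col v)
    omega
  have h_out : ∀ v, (Xorig.filter (fun e => e.1 = v)).card ≤ 1 :=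
    fun v => le_trans (hflow v) (h_in v)
  -- successor function
  obtain ⟨f, hf⟩ : ∃ f : V → Option V, ∀ v w, f v = some w ↔ (v, w) ∈ Xorig := by
    refine ⟨fun v =>
      if h : (Xorig.filter (fun e => e.1 = v)).Nonempty then some h.choose.2 else none, ?_⟩
    intro v w
    constructor
    · intro hv
      dsimp only at hv
      split at hv
      · rename_i h
        injection hv with hv
        obtain ⟨he1, he2⟩ := Finset.mem_filter.mp h.choose_spec
        have heq : Exists.choose h = (v, w) := Prod.ext he2 hv
        rw [← heq]
        exact he1
      · exact absurd hv (by simp)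
    · intro hw
      have hmem : (v, w) ∈ Xorig.filter (fun e => e.1 = v) :=
        Finset.mem_filter.mpr ⟨hw, rfl⟩
      have hne : (Xorig.filter (fun e => e.1 = v)).Nonempty := ⟨(v, w), hmem⟩
      dsimp only
      rw [dif_pos hne]
      have := Finset.card_le_one.mp (h_out v) _ hne.choose_spec _ hmem
      rw [this]
  -- start function
  obtain ⟨g, hg⟩ : ∃ g : Fin nd → Option V, ∀ i v, g i = some v ↔ (i, v) ∈ Xaux := by
    refine ⟨fun i =>
      if h : (Xaux.filter (fun e => e.1 = i)).Nonempty then some h.choose.2 else none, ?_⟩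
    intro i v
    constructor
    · intro hv
      dsimp only at hv
      split at hv
      · rename_i h
        injection hv with hv
        obtain ⟨he1, he2⟩ := Finset.mem_filter.mp h.choose_spec
        have heq : Exists.choose h = (i, v) := Prod.ext he2 hv
        rw [← heq]
        exact he1
      · exact absurd hv (by simp)
    · intro hw
      have hmem : (i, v) ∈ Xaux.filter (fun e => e.1 = i) :=
        Finset.mem_filter.mpr ⟨hw, rfl⟩
      have hne : (Xaux.filter (fun e => e.1 = i)).Nonempty := ⟨(i, v), hmem⟩
      dsimp only
      rw [dif_pos hne]
      have := Finset.card_le_one.mp (haux i) _ hne.choose_spec _ hmem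
      rw [this]
  -- well-foundedness
  have wfE : WellFounded (fun a b : V => (b, a) ∈ E) := by
    letI : IsTrans V (fun a b : V => Relation.TransGen (fun x y : V => (x, y) ∈ E) b a) :=
      ⟨fun a b c hab hbc => hbc.trans hab⟩
    letI : IsIrrefl V (fun a b : V => Relation.TransGen (fun x y : V => (x, y) ∈ E) b a) :=
      ⟨fun a h => hdag a h⟩
    exact Subrelation.wf
      (r := fun a b : V => Relation.TransGen (fun x y : V => (x, y) ∈ E) b a)
      (fun {a b} h => Relation.TransGen.single h)
      (Finite.wellFounded_of_trans_of_irrefl _)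
  have wfR : WellFounded (fun a b : V => (a, b) ∈ E) := by
    letI : IsTrans V (Relation.TransGen (fun x y : V => (x, y) ∈ E)) :=
      ⟨fun a b c hab hbc => hab.trans hbc⟩
    letI : IsIrrefl V (Relation.TransGen (fun x y : V => (x, y) ∈ E)) :=
      ⟨fun a h => hdag a h⟩
    exact Subrelation.wf
      (r := Relation.TransGen (fun x y : V => (x, y) ∈ E))
      (fun {a b} h => Relation.TransGen.single h)
      (Finite.wellFounded_of_trans_of_irrefl _)
  have wf : WellFounded (fun a b : V => f b = some a) :=
    Subrelation.wf (fun {a b} h => hXE ((hf _ _).mp h)) wfE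
  -- step relation irreflexivity
  have hirr : ∀ v, ¬ Relation.TransGen (fun a b : V => f a = some b) v v :=
    fun v h => hdag v (Relation.TransGen.mono (fun a b hab => hXE ((hf a b).mp hab)) v v h)
  -- uniqueness lemmas
  have horig_uniq : ∀ u u' v : V, (u, v) ∈ Xorig → (u', v) ∈ Xorig → u = u' := by
    intro u u' v hu hu'
    have hc : (Xorig.filter (fun e => e.2 = v)).card ≤ 1 := le_trans (Nat.le_add_right _ _) (h_in v)
    have := Finset.card_le_one.mp hc _ (Finset.mem_filter.mpr ⟨hu, rfl⟩)
      _ (Finset.mem_filter.mpr ⟨hu', rfl⟩)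
    exact congrArg Prod.fst this
  have haux_uniq : ∀ (i j : Fin nd) (v : V), (i, v) ∈ Xaux → (j, v) ∈ Xaux → i = j := by
    intro i j v hi hj
    have hc : (Xaux.filter (fun e => e.2 = v)).card ≤ 1 := le_trans (Nat.le_add_left _ _) (h_in v)
    have := Finset.card_le_one.mp hc _ (Finset.mem_filter.mpr ⟨hi, rfl⟩)
      _ (Finset.mem_filter.mpr ⟨hj, rfl⟩)
    exact congrArg Prod.fst this
  have hmixed : ∀ (u : V) (j : Fin nd) (v : V), (u, v) ∈ Xorig → (j, v) ∈ Xaux → False := by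
    intro u j v hu hj
    have h1 : 0 < (Xorig.filter (fun e => e.2 = v)).card :=
      Finset.card_pos.mpr ⟨(u, v), Finset.mem_filter.mpr ⟨hu, rfl⟩⟩
    have h2 : 0 < (Xaux.filter (fun e => e.2 = v)).card :=
      Finset.card_pos.mpr ⟨(j, v), Finset.mem_filter.mpr ⟨hj, rfl⟩⟩
    have := h_in v
    omega
  -- comparability of sources reaching a common vertex
  have hcomp : ∀ a b w : V,
      Relation.ReflTransGen (fun x y => f x = some y) a w →
      Relation.ReflTransGen (fun x y => f x = some y) b w →
      Relation.ReflTransGen (fun x y => f x = some y) a b ∨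
      Relation.ReflTransGen (fun x y => f x = some y) b a := by
    intro a b w ha hb
    have U : Relator.RightUnique (Function.swap (fun x y : V => f x = some y)) := by
      intro x y z hxy hxz
      exact horig_uniq y z x ((hf _ _).mp hxy) ((hf _ _).mp hxz)
    have := Relation.ReflTransGen.total_of_right_unique U
      (Relation.reflTransGen_swap.mpr ha) (Relation.reflTransGen_swap.mpr hb)
    rcases this with h | h
    · exact Or.inr (Relation.reflTransGen_swap.mp h)
    · exact Or.inl (Relation.reflTransGen_swap.mp h)
  -- the paths
  set P : Fin nd → List V := fun i => (g i).elim [] (fun v => followList f wf v) with hPdef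
  have hP_none : ∀ i, g i = none → P i = [] := by intro i h; simp [hPdef, h]
  have hP_some : ∀ i v, g i = some v → P i = followList f wf v := by intro i v h; simp [hPdef, h]
  have hmemP : ∀ (i : Fin nd) (w : V), w ∈ P i ↔
      ∃ v, g i = some v ∧ Relation.ReflTransGen (fun x y => f x = some y) v w := by
    intro i w
    cases h : g i with
    | none => simp [hP_none i h, h]
    | some v =>
      rw [hP_some i v h, mem_followList_iff]
      constructor
      · intro hr; exact ⟨v, rfl, hr⟩
      · rintro ⟨v', hv', hr⟩
        injection hv' with hv'
        subst hv'
        exact hr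
  -- members of paths have an in-edge
  have hmem_hasIn : ∀ (i : Fin nd) (w : V), w ∈ P i →
      (∃ u, (u, w) ∈ Xorig) ∨ (∃ j, (j, w) ∈ Xaux) := by
    intro i w hw
    obtain ⟨v, hv, hr⟩ := (hmemP i w).mp hw
    rcases Relation.ReflTransGen.cases_tail hr with heq | ⟨c, _, hc⟩
    · exact Or.inr ⟨i, (hg i w).mp (heq ▸ hv)⟩
    · exact Or.inl ⟨c, (hf c w).mp hc⟩
  -- every vertex with an in-edge is on some path
  have hhasIn_mem : ∀ w : V,
      (∃ u, (u, w) ∈ Xorig) ∨ (∃ j, (j, w) ∈ Xaux) → ∃ i, w ∈ P i := by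
    intro w
    apply wfR.induction w
      (C := fun w => (∃ u, (u, w) ∈ Xorig) ∨ (∃ j, (j, w) ∈ Xaux) → ∃ i, w ∈ P i)
    intro x ih hx
    rcases hx with ⟨u, hu⟩ | ⟨j, hj⟩
    · have huIn : (∃ u', (u', u) ∈ Xorig) ∨ (∃ j, (j, u) ∈ Xaux) := by
        have h1 : 0 < (Xorig.filter (fun e => e.1 = u)).card :=
          Finset.card_pos.mpr ⟨(u, x), Finset.mem_filter.mpr ⟨hu, rfl⟩⟩
        have h2 := hflow u
        by_contra hcon
        push_neg at hcon
        have e1 : Xorig.filter (fun e => e.2 = u) = ∅ := by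
          apply Finset.filter_eq_empty_iff.mpr
          intro e he h
          exact hcon.1 e.1 (by rw [← h, Prod.mk.eta]; exact he)
        have e2 : Xaux.filter (fun e => e.2 = u) = ∅ := by
          apply Finset.filter_eq_empty_iff.mpr
          intro e he h
          exact hcon.2 e.1 (by rw [← h, Prod.mk.eta]; exact he)
        rw [e1, e2] at h2
        simp only [Finset.card_empty, Nat.add_zero, Nat.le_zero] at h2
        omega
      obtain ⟨i, hi⟩ := ih u (hXE hu) huIn
      obtain ⟨v, hv, hr⟩ := (hmemP i u).mp hi
      exact ⟨i, (hmemP i x).mpr ⟨v, hv, hr.tail ((hf u x).mpr hu)⟩⟩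
    · exact ⟨j, (hmemP j x).mpr ⟨x, (hg j x).mpr hj, Relation.ReflTransGen.refl⟩⟩
  -- disjointness key
  have hkey : ∀ (i j : Fin nd) (a b : V), i ≠ j → g i = some a → g j = some b →
      ¬ Relation.ReflTransGen (fun x y => f x = some y) a b := by
    intro i j a b hij ha hb hr
    rcases Relation.ReflTransGen.cases_tail hr with heq | ⟨c, _, hc⟩
    · exact hij (haux_uniq i j a ((hg i a).mp ha) (heq ▸ (hg j b).mp hb))
    · exact hmixed c j b ((hf c b).mp hc) ((hg j b).mp hb)
  have hdisj : ∀ i j, i ≠ j → ∀ v, v ∈ P i → v ∉ P j := by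
    intro i j hij v hvi hvj
    obtain ⟨a, hga, hra⟩ := (hmemP i v).mp hvi
    obtain ⟨b, hgb, hrb⟩ := (hmemP j v).mp hvj
    rcases hcomp a b v hra hrb with h | h
    · exact hkey i j a b hij hga hgb h
    · exact hkey j i b a (Ne.symm hij) hgb hga h
  have hnodup : ∀ i, (P i).Nodup := by
    intro i
    cases h : g i with
    | none => rw [hP_none i h]; exact List.nodup_nil
    | some v => rw [hP_some i v h]; exact followList_nodup hirr v
  refine ⟨P, hnodup, hdisj, ?_, ?_, ?_, ?_⟩
  · -- chains
    intro i
    cases h : g i with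
    | none => rw [hP_none i h]; exact List.isChain_nil
    | some v =>
      rw [hP_some i v h]
      exact (followList_chain' v).imp (fun a b hab => (hf a b).mp hab)
  · -- heads
    intro i hne
    cases h : g i with
    | none => exact absurd (hP_none i h) hne
    | some v =>
      obtain ⟨t, ht⟩ := followList_cons (wf := wf) v
      have hPi : P i = v :: t := by rw [hP_some i v h]; exact ht
      revert hne
      rw [hPi]
      intro hne
      simpa using (hg i v).mp h
  · -- zip characterization
    rintro ⟨a, b⟩
    constructor
    · intro hab
      have haIn : (∃ u, (u, a) ∈ Xorig) ∨ (∃ j, (j, a) ∈ Xaux) := by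
        have h1 : 0 < (Xorig.filter (fun e => e.1 = a)).card :=
          Finset.card_pos.mpr ⟨(a, b), Finset.mem_filter.mpr ⟨hab, rfl⟩⟩
        have h2 := hflow a
        by_contra hcon
        push_neg at hcon
        have e1 : Xorig.filter (fun e => e.2 = a) = ∅ := by
          apply Finset.filter_eq_empty_iff.mpr
          intro e he h
          exact hcon.1 e.1 (by rw [← h, Prod.mk.eta]; exact he)
        have e2 : Xaux.filter (fun e => e.2 = a) = ∅ := by
          apply Finset.filter_eq_empty_iff.mpr
          intro e he h
          exact hcon.2 e.1 (by rw [← h, Prod.mk.eta]; exact he)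
        rw [e1, e2] at h2
        simp only [Finset.card_empty, Nat.add_zero, Nat.le_zero] at h2
        omega
      obtain ⟨i, hi⟩ := hhasIn_mem a haIn
      obtain ⟨v, hv, _⟩ := (hmemP i a).mp hi
      refine ⟨i, ?_⟩
      rw [hP_some i v hv] at hi ⊢
      exact mem_zip_followList hi ((hf a b).mpr hab)
    · rintro ⟨i, hzip⟩
      cases h : g i with
      | none => rw [hP_none i h] at hzip; simp at hzip
      | some v =>
        rw [hP_some i v h] at hzip
        exact (hf a b).mp (rel_of_mem_zip (followList_chain' v) hzip)
  · -- colors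
    intro c
    -- existence of the unique color-c vertex with an in-edge
    have hone := hcolor c
    have hex : ∃ w : V, ((∃ u, (u, w) ∈ Xorig) ∨ (∃ j, (j, w) ∈ Xaux)) ∧ col w = c := by
      by_cases hS1 : (Xorig.filter (fun e => col e.2 = c)).Nonempty
      · obtain ⟨e, he⟩ := hS1
        obtain ⟨he1, he2⟩ := Finset.mem_filter.mp he
        exact ⟨e.2, Or.inl ⟨e.1, by rwa [Prod.mk.eta]⟩, he2⟩
      · have hc1 : (Xorig.filter (fun e => col e.2 = c)).card = 0 := by
          rw [Finset.card_eq_zero, ← Finset.not_nonempty_iff_eq_empty]; exact hS1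
        have hS2 : (Xaux.filter (fun e => col e.2 = c)).Nonempty := by
          rw [← Finset.card_pos]; omega
        obtain ⟨e, he⟩ := hS2
        obtain ⟨he1, he2⟩ := Finset.mem_filter.mp he
        exact ⟨e.2, Or.inr ⟨e.1, by rwa [Prod.mk.eta]⟩, he2⟩
    obtain ⟨vstar, hvIn, hvcol⟩ := hex
    have huniq : ∀ w : V, ((∃ u, (u, w) ∈ Xorig) ∨ (∃ j, (j, w) ∈ Xaux)) → col w = c →
        w = vstar := by
      have pairwise : ∀ w w' : V,
          ((∃ u, (u, w) ∈ Xorig) ∨ (∃ j, (j, w) ∈ Xaux)) →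
          ((∃ u, (u, w') ∈ Xorig) ∨ (∃ j, (j, w') ∈ Xaux)) →
          col w = c → col w' = c → w = w' := by
        intro w w' hw hw' hcw hcw'
        rcases hw with ⟨u, hu⟩ | ⟨j, hj⟩ <;> rcases hw' with ⟨u', hu'⟩ | ⟨j', hj'⟩
        · have hc1 : (Xorig.filter (fun e => col e.2 = c)).card ≤ 1 := by omega
          have := Finset.card_le_one.mp hc1 _ (Finset.mem_filter.mpr ⟨hu, hcw⟩)
            _ (Finset.mem_filter.mpr ⟨hu', hcw'⟩)
          exact congrArg Prod.snd this
        · have h1 : 0 < (Xorig.filter (fun e => col e.2 = c)).card :=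
            Finset.card_pos.mpr ⟨(u, w), Finset.mem_filter.mpr ⟨hu, hcw⟩⟩
          have h2 : 0 < (Xaux.filter (fun e => col e.2 = c)).card :=
            Finset.card_pos.mpr ⟨(j', w'), Finset.mem_filter.mpr ⟨hj', hcw'⟩⟩
          omega
        · have h1 : 0 < (Xorig.filter (fun e => col e.2 = c)).card :=
            Finset.card_pos.mpr ⟨(u', w'), Finset.mem_filter.mpr ⟨hu', hcw'⟩⟩
          have h2 : 0 < (Xaux.filter (fun e => col e.2 = c)).card :=
            Finset.card_pos.mpr ⟨(j, w), Finset.mem_filter.mpr ⟨hj, hcw⟩⟩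
          omega
        · have hc2 : (Xaux.filter (fun e => col e.2 = c)).card ≤ 1 := by omega
          have := Finset.card_le_one.mp hc2 _ (Finset.mem_filter.mpr ⟨hj, hcw⟩)
            _ (Finset.mem_filter.mpr ⟨hj', hcw'⟩)
          exact congrArg Prod.snd this
      intro w hw hcw
      exact pairwise w vstar hw hvIn hcw hvcol
    obtain ⟨i₀, hi₀⟩ := hhasIn_mem vstar hvIn
    have hall : ∀ i : Fin nd, ∀ x ∈ P i, (fun v => decide (col v = c)) x = true → x = vstar := by
      intro i x hx hpx
      exact huniq x (hmem_hasIn i x hx) (of_decide_eq_true hpx)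
    rw [Finset.sum_eq_single i₀]
    · rw [length_filter_eq (hnodup i₀) (hall i₀)]
      rw [if_pos ⟨hi₀, by simp [hvcol]⟩]
    · intro b _ hb
      rw [length_filter_eq (hnodup b) (hall b)]
      rw [if_neg]
      rintro ⟨hmem, _⟩
      exact hdisj i₀ b (Ne.symm hb) vstar hi₀ hmem
    · intro h
      exact absurd (Finset.mem_univ i₀) h
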